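/- Consider the eight polynomial constraint functions of Stachel's extended double-Watt framework in the eight real variables (a₀, b₀, a₁, b₁, a₂, b₂, a₃, b₃): c₁ = a₀² + b₀² − 1, c₂ = (a₁ + 3)² + (b₁ + 1)² − 1, c₃ = (a₂ − 3)² + b₂² − 1, c₄ = a₃² + (b₃ + 1)² − 1, c₅ = (a₀ − a₁)² + (b₀ − b₁)² − 2, c₆ = (a₂ − a₃)² + (b₂ − b₃)² − 2, c₇ = ((a₂ + a₃ − a₀ − a₁)/2)² + ((b₂ + b₃ − b₀ − b₁)/2)² − 9, c₈ = a₀ + a₁ + a₂ + a₃. Then all eight constraints vanish at the configuration X = (−1, 0, −2, −1, 2, 0, 1, −1), and the 8×8 Jacobian matrix whose (i,j) entry is the partial derivative of c_j with respect to the i-th variable, evaluated at X, has rank 6. In particular X is a singular point of the shakiness variety V₁ = {det of the Jacobian = 0}. -/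

import Mathlib

/-- The eight constraint functions of Stachel's extended double-Watt framework
in the variables `(a₀, b₀, a₁, b₁, a₂, b₂, a₃, b₃)`. -/
noncomputable def stachelConstraints : Fin 8 → (Fin 8 → ℝ) → ℝ :=
  ![fun x => x 0 ^ 2 + x 1 ^ 2 - 1,
    fun x => (x 2 + 3) ^ 2 + (x 3 + 1) ^ 2 - 1,
    fun x => (x 4 - 3) ^ 2 + x 5 ^ 2 - 1,
    fun x => x 6 ^ 2 + (x 7 + 1) ^ 2 - 1,
    fun x => (x 0 - x 2) ^ 2 + (x 1 - x 3) ^ 2 - 2,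
    fun x => (x 4 - x 6) ^ 2 + (x 5 - x 7) ^ 2 - 2,
    fun x => ((x 4 + x 6 - x 0 - x 2) / 2) ^ 2 +
      ((x 5 + x 7 - x 1 - x 3) / 2) ^ 2 - 9,
    fun x => x 0 + x 2 + x 4 + x 6]

/-- The cusp configuration of Stachel's extended double-Watt framework. -/
noncomputable def stachelConfig : Fin 8 → ℝ := ![-1, 0, -2, -1, 2, 0, 1, -1]

/-! ### Auxiliary material -/

/-- The `k`-th coordinate projection as a continuous linear map. -/
noncomputable def sP (k : Fin 8) : (Fin 8 → ℝ) →L[ℝ] ℝ := ContinuousLinearMap.proj k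

lemma hasFDerivAt_coord (k : Fin 8) :
    HasFDerivAt (fun x : Fin 8 → ℝ => x k) (sP k) stachelConfig := by
  have h := (sP k).hasFDerivAt (x := stachelConfig)
  have e : ⇑(sP k) = fun x : Fin 8 → ℝ => x k := by
    funext x; simp [sP]
  rwa [e] at h

/-- The explicit Jacobian matrix at the cusp configuration. -/
noncomputable def sM : Matrix (Fin 8) (Fin 8) ℝ :=
  !![-2, 0, 0, 0, 2, 0, -3, 1;
      0, 0, 0, 0, 2, 0, 0, 0;
      0, 2, 0, 0, -2, 0, -3, 1;
      0, 0, 0, 0, -2, 0, 0, 0;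
      0, 0, -2, 0, 0, 2, 3, 1;
      0, 0, 0, 0, 0, 2, 0, 0;
      0, 0, 0, 2, 0, -2, 3, 1;
      0, 0, 0, 0, 0, -2, 0, 0]

noncomputable def sA : Matrix (Fin 8) (Fin 6) ℝ :=
  !![1, 0, 0, 0, 0, 0;
     0, 1, 0, 0, 0, 0;
     0, 0, 1, 0, 0, 0;
     0, -1, 0, 0, 0, 0;
     0, 0, 0, 1, 0, 0;
     0, 0, 0, 0, 1, 0;
     0, 0, 0, 0, 0, 1;
     0, 0, 0, 0, -1, 0]

noncomputable def sB : Matrix (Fin 6) (Fin 8) ℝ :=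
  !![-2, 0, 0, 0, 2, 0, -3, 1;
      0, 0, 0, 0, 2, 0, 0, 0;
      0, 2, 0, 0, -2, 0, -3, 1;
      0, 0, -2, 0, 0, 2, 3, 1;
      0, 0, 0, 0, 0, 2, 0, 0;
      0, 0, 0, 2, 0, -2, 3, 1]

noncomputable def sC : Matrix (Fin 6) (Fin 8) ℝ :=
  !![-1/2, 1/2, 0, 0, 0, 0, 0, 0;
      0, 1/2, 1/2, 0, 0, 0, 0, 0;
      0, 0, 0, 0, -1/2, 1/2, 0, 0;
      0, 0, 0, 0, 0, 1/2, 1/2, 0;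
      0, 1/2, 0, 0, 0, 0, 0, 0;
      0, 0, 0, 0, 0, 1/2, 0, 0]

noncomputable def sD : Matrix (Fin 8) (Fin 6) ℝ :=
  !![1, 0, 0, 0, 0, 0;
     0, 1, 0, 0, 0, 0;
     0, 0, 1, 0, 0, 0;
     0, 0, 0, 1, 0, 0;
     0, 0, 0, 0, 1, 0;
     0, 0, 0, 0, 0, 1;
     0, 0, 0, 0, 0, 0;
     0, 0, 0, 0, 0, 0]

noncomputable def sE : Matrix (Fin 6) (Fin 8) ℝ :=
  !![1, 0, 0, 0, 0, 0, 3/2, -1/2;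
     0, 1, 0, 0, 0, 0, -3/2, 1/2;
     0, 0, 1, 0, 0, 0, -3/2, -1/2;
     0, 0, 0, 1, 0, 0, 3/2, 1/2;
     0, 0, 0, 0, 1, 0, 0, 0;
     0, 0, 0, 0, 0, 1, 0, 0]

lemma cv8_5 {α : Type*} (a : α) (u : Fin 7 → α) : Matrix.vecCons a u 5 = u 4 := rfl
lemma cv8_6 {α : Type*} (a : α) (u : Fin 7 → α) : Matrix.vecCons a u 6 = u 5 := rfl
lemma cv8_7 {α : Type*} (a : α) (u : Fin 7 → α) : Matrix.vecCons a u 7 = u 6 := rfl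
lemma cv7_5 {α : Type*} (a : α) (u : Fin 6 → α) : Matrix.vecCons a u 5 = u 4 := rfl
lemma cv7_6 {α : Type*} (a : α) (u : Fin 6 → α) : Matrix.vecCons a u 6 = u 5 := rfl
lemma cv6_5 {α : Type*} (a : α) (u : Fin 5 → α) : Matrix.vecCons a u 5 = u 4 := rfl

lemma hd0 : HasFDerivAt (stachelConstraints 0)
    ((stachelConfig 0 • sP 0 + stachelConfig 0 • sP 0) +
     (stachelConfig 1 • sP 1 + stachelConfig 1 • sP 1)) stachelConfig := by
  have hfun : stachelConstraints 0 = fun x : Fin 8 → ℝ => (x 0 * x 0 + x 1 * x 1) - 1 := by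
    rw [show stachelConstraints 0 = (fun x : Fin 8 → ℝ => x 0 ^ 2 + x 1 ^ 2 - 1) from rfl]
    funext x; ring
  rw [hfun]
  exact (((hasFDerivAt_coord 0).mul (hasFDerivAt_coord 0)).add
    ((hasFDerivAt_coord 1).mul (hasFDerivAt_coord 1))).sub_const 1

lemma hd1 : HasFDerivAt (stachelConstraints 1)
    (((stachelConfig 2 + 3) • sP 2 + (stachelConfig 2 + 3) • sP 2) +
     ((stachelConfig 3 + 1) • sP 3 + (stachelConfig 3 + 1) • sP 3)) stachelConfig := by
  have hfun : stachelConstraints 1 =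
      fun x : Fin 8 → ℝ => ((x 2 + 3) * (x 2 + 3) + (x 3 + 1) * (x 3 + 1)) - 1 := by
    rw [show stachelConstraints 1 = (fun x : Fin 8 → ℝ => (x 2 + 3) ^ 2 + (x 3 + 1) ^ 2 - 1) from rfl]
    funext x; ring
  rw [hfun]
  exact ((((hasFDerivAt_coord 2).add_const 3).mul ((hasFDerivAt_coord 2).add_const 3)).add
    (((hasFDerivAt_coord 3).add_const 1).mul ((hasFDerivAt_coord 3).add_const 1))).sub_const 1

lemma hd2 : HasFDerivAt (stachelConstraints 2)
    (((stachelConfig 4 - 3) • sP 4 + (stachelConfig 4 - 3) • sP 4) +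
     (stachelConfig 5 • sP 5 + stachelConfig 5 • sP 5)) stachelConfig := by
  have hfun : stachelConstraints 2 =
      fun x : Fin 8 → ℝ => ((x 4 - 3) * (x 4 - 3) + x 5 * x 5) - 1 := by
    rw [show stachelConstraints 2 = (fun x : Fin 8 → ℝ => (x 4 - 3) ^ 2 + x 5 ^ 2 - 1) from rfl]
    funext x; ring
  rw [hfun]
  exact ((((hasFDerivAt_coord 4).sub_const 3).mul ((hasFDerivAt_coord 4).sub_const 3)).add
    ((hasFDerivAt_coord 5).mul (hasFDerivAt_coord 5))).sub_const 1

lemma hd3 : HasFDerivAt (stachelConstraints 3)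
    ((stachelConfig 6 • sP 6 + stachelConfig 6 • sP 6) +
     ((stachelConfig 7 + 1) • sP 7 + (stachelConfig 7 + 1) • sP 7)) stachelConfig := by
  have hfun : stachelConstraints 3 =
      fun x : Fin 8 → ℝ => (x 6 * x 6 + (x 7 + 1) * (x 7 + 1)) - 1 := by
    rw [show stachelConstraints 3 = (fun x : Fin 8 → ℝ => x 6 ^ 2 + (x 7 + 1) ^ 2 - 1) from rfl]
    funext x; ring
  rw [hfun]
  exact (((hasFDerivAt_coord 6).mul (hasFDerivAt_coord 6)).add
    (((hasFDerivAt_coord 7).add_const 1).mul ((hasFDerivAt_coord 7).add_const 1))).sub_const 1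

lemma hd4 : HasFDerivAt (stachelConstraints 4)
    (((stachelConfig 0 - stachelConfig 2) • (sP 0 - sP 2) +
      (stachelConfig 0 - stachelConfig 2) • (sP 0 - sP 2)) +
     ((stachelConfig 1 - stachelConfig 3) • (sP 1 - sP 3) +
      (stachelConfig 1 - stachelConfig 3) • (sP 1 - sP 3))) stachelConfig := by
  have hfun : stachelConstraints 4 =
      fun x : Fin 8 → ℝ => ((x 0 - x 2) * (x 0 - x 2) + (x 1 - x 3) * (x 1 - x 3)) - 2 := by
    rw [show stachelConstraints 4 = (fun x : Fin 8 → ℝ => (x 0 - x 2) ^ 2 + (x 1 - x 3) ^ 2 - 2) from rfl]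
    funext x; ring
  rw [hfun]
  exact ((((hasFDerivAt_coord 0).sub (hasFDerivAt_coord 2)).mul
      ((hasFDerivAt_coord 0).sub (hasFDerivAt_coord 2))).add
    (((hasFDerivAt_coord 1).sub (hasFDerivAt_coord 3)).mul
      ((hasFDerivAt_coord 1).sub (hasFDerivAt_coord 3)))).sub_const 2

lemma hd5 : HasFDerivAt (stachelConstraints 5)
    (((stachelConfig 4 - stachelConfig 6) • (sP 4 - sP 6) +
      (stachelConfig 4 - stachelConfig 6) • (sP 4 - sP 6)) +
     ((stachelConfig 5 - stachelConfig 7) • (sP 5 - sP 7) +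
      (stachelConfig 5 - stachelConfig 7) • (sP 5 - sP 7))) stachelConfig := by
  have hfun : stachelConstraints 5 =
      fun x : Fin 8 → ℝ => ((x 4 - x 6) * (x 4 - x 6) + (x 5 - x 7) * (x 5 - x 7)) - 2 := by
    rw [show stachelConstraints 5 = (fun x : Fin 8 → ℝ => (x 4 - x 6) ^ 2 + (x 5 - x 7) ^ 2 - 2) from rfl]
    funext x; ring
  rw [hfun]
  exact ((((hasFDerivAt_coord 4).sub (hasFDerivAt_coord 6)).mul
      ((hasFDerivAt_coord 4).sub (hasFDerivAt_coord 6))).add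
    (((hasFDerivAt_coord 5).sub (hasFDerivAt_coord 7)).mul
      ((hasFDerivAt_coord 5).sub (hasFDerivAt_coord 7)))).sub_const 2

lemma hd6 : HasFDerivAt (stachelConstraints 6)
    ((((stachelConfig 4 + stachelConfig 6 - stachelConfig 0 - stachelConfig 2) * (1/2)) •
        ((1/2 : ℝ) • (sP 4 + sP 6 - sP 0 - sP 2)) +
      ((stachelConfig 4 + stachelConfig 6 - stachelConfig 0 - stachelConfig 2) * (1/2)) •
        ((1/2 : ℝ) • (sP 4 + sP 6 - sP 0 - sP 2))) +
     (((stachelConfig 5 + stachelConfig 7 - stachelConfig 1 - stachelConfig 3) * (1/2)) •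
        ((1/2 : ℝ) • (sP 5 + sP 7 - sP 1 - sP 3)) +
      ((stachelConfig 5 + stachelConfig 7 - stachelConfig 1 - stachelConfig 3) * (1/2)) •
        ((1/2 : ℝ) • (sP 5 + sP 7 - sP 1 - sP 3)))) stachelConfig := by
  have hfun : stachelConstraints 6 =
      fun x : Fin 8 → ℝ =>
        (((x 4 + x 6 - x 0 - x 2) * (1/2)) * ((x 4 + x 6 - x 0 - x 2) * (1/2)) +
         ((x 5 + x 7 - x 1 - x 3) * (1/2)) * ((x 5 + x 7 - x 1 - x 3) * (1/2))) - 9 := by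
    rw [show stachelConstraints 6 = (fun x : Fin 8 → ℝ => ((x 4 + x 6 - x 0 - x 2) / 2) ^ 2 + ((x 5 + x 7 - x 1 - x 3) / 2) ^ 2 - 9) from rfl]
    funext x; ring
  rw [hfun]
  have hu : HasFDerivAt (fun x : Fin 8 → ℝ => (x 4 + x 6 - x 0 - x 2) * (1/2))
      ((1/2 : ℝ) • (sP 4 + sP 6 - sP 0 - sP 2)) stachelConfig :=
    ((((hasFDerivAt_coord 4).add (hasFDerivAt_coord 6)).sub
      (hasFDerivAt_coord 0)).sub (hasFDerivAt_coord 2)).mul_const (1/2)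
  have hv : HasFDerivAt (fun x : Fin 8 → ℝ => (x 5 + x 7 - x 1 - x 3) * (1/2))
      ((1/2 : ℝ) • (sP 5 + sP 7 - sP 1 - sP 3)) stachelConfig :=
    ((((hasFDerivAt_coord 5).add (hasFDerivAt_coord 7)).sub
      (hasFDerivAt_coord 1)).sub (hasFDerivAt_coord 3)).mul_const (1/2)
  exact ((hu.mul hu).add (hv.mul hv)).sub_const 9

lemma hd7 : HasFDerivAt (stachelConstraints 7)
    (sP 0 + sP 2 + sP 4 + sP 6) stachelConfig := by
  have hfun : stachelConstraints 7 = fun x : Fin 8 → ℝ => x 0 + x 2 + x 4 + x 6 := by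
    rfl
  rw [hfun]
  exact (((hasFDerivAt_coord 0).add (hasFDerivAt_coord 2)).add
    (hasFDerivAt_coord 4)).add (hasFDerivAt_coord 6)

lemma col0 (i : Fin 8) :
    fderiv ℝ (stachelConstraints 0) stachelConfig (Pi.single i 1) = sM i 0 := by
  rw [hd0.fderiv]
  fin_cases i <;>
  simp [sM, sP, stachelConfig, ContinuousLinearMap.add_apply, ContinuousLinearMap.sub_apply,
    ContinuousLinearMap.smul_apply, ContinuousLinearMap.proj_apply, Pi.single_apply,
    cv8_5, cv8_6, cv8_7, cv7_5, cv7_6, cv6_5, Matrix.vecHead, Matrix.vecTail] <;>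
  norm_num

lemma col1 (i : Fin 8) :
    fderiv ℝ (stachelConstraints 1) stachelConfig (Pi.single i 1) = sM i 1 := by
  rw [hd1.fderiv]
  fin_cases i <;>
  simp [sM, sP, stachelConfig, ContinuousLinearMap.add_apply, ContinuousLinearMap.sub_apply,
    ContinuousLinearMap.smul_apply, ContinuousLinearMap.proj_apply, Pi.single_apply,
    cv8_5, cv8_6, cv8_7, cv7_5, cv7_6, cv6_5, Matrix.vecHead, Matrix.vecTail] <;>
  norm_num

lemma col2 (i : Fin 8) :
    fderiv ℝ (stachelConstraints 2) stachelConfig (Pi.single i 1) = sM i 2 := by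
  rw [hd2.fderiv]
  fin_cases i <;>
  simp [sM, sP, stachelConfig, ContinuousLinearMap.add_apply, ContinuousLinearMap.sub_apply,
    ContinuousLinearMap.smul_apply, ContinuousLinearMap.proj_apply, Pi.single_apply,
    cv8_5, cv8_6, cv8_7, cv7_5, cv7_6, cv6_5, Matrix.vecHead, Matrix.vecTail] <;>
  norm_num

lemma col3 (i : Fin 8) :
    fderiv ℝ (stachelConstraints 3) stachelConfig (Pi.single i 1) = sM i 3 := by
  rw [hd3.fderiv]
  fin_cases i <;>
  simp [sM, sP, stachelConfig, ContinuousLinearMap.add_apply, ContinuousLinearMap.sub_apply,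
    ContinuousLinearMap.smul_apply, ContinuousLinearMap.proj_apply, Pi.single_apply,
    cv8_5, cv8_6, cv8_7, cv7_5, cv7_6, cv6_5, Matrix.vecHead, Matrix.vecTail] <;>
  norm_num

lemma col4 (i : Fin 8) :
    fderiv ℝ (stachelConstraints 4) stachelConfig (Pi.single i 1) = sM i 4 := by
  rw [hd4.fderiv]
  fin_cases i <;>
  simp [sM, sP, stachelConfig, ContinuousLinearMap.add_apply, ContinuousLinearMap.sub_apply,
    ContinuousLinearMap.smul_apply, ContinuousLinearMap.proj_apply, Pi.single_apply,
    cv8_5, cv8_6, cv8_7, cv7_5, cv7_6, cv6_5, Matrix.vecHead, Matrix.vecTail] <;>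
  norm_num

lemma col5 (i : Fin 8) :
    fderiv ℝ (stachelConstraints 5) stachelConfig (Pi.single i 1) = sM i 5 := by
  rw [hd5.fderiv]
  fin_cases i <;>
  simp [sM, sP, stachelConfig, ContinuousLinearMap.add_apply, ContinuousLinearMap.sub_apply,
    ContinuousLinearMap.smul_apply, ContinuousLinearMap.proj_apply, Pi.single_apply,
    cv8_5, cv8_6, cv8_7, cv7_5, cv7_6, cv6_5, Matrix.vecHead, Matrix.vecTail] <;>
  norm_num

lemma col6 (i : Fin 8) :
    fderiv ℝ (stachelConstraints 6) stachelConfig (Pi.single i 1) = sM i 6 := by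
  rw [hd6.fderiv]
  fin_cases i <;>
  simp [sM, sP, stachelConfig, ContinuousLinearMap.add_apply, ContinuousLinearMap.sub_apply,
    ContinuousLinearMap.smul_apply, ContinuousLinearMap.proj_apply, Pi.single_apply,
    cv8_5, cv8_6, cv8_7, cv7_5, cv7_6, cv6_5, Matrix.vecHead, Matrix.vecTail] <;>
  norm_num

lemma col7 (i : Fin 8) :
    fderiv ℝ (stachelConstraints 7) stachelConfig (Pi.single i 1) = sM i 7 := by
  rw [hd7.fderiv]
  fin_cases i <;>
  simp [sM, sP, stachelConfig, ContinuousLinearMap.add_apply, ContinuousLinearMap.sub_apply,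
    ContinuousLinearMap.smul_apply, ContinuousLinearMap.proj_apply, Pi.single_apply,
    cv8_5, cv8_6, cv8_7, cv7_5, cv7_6, cv6_5, Matrix.vecHead, Matrix.vecTail] <;>
  norm_num

lemma jac_eq : (Matrix.of fun i j : Fin 8 =>
    fderiv ℝ (stachelConstraints j) stachelConfig (Pi.single i 1)) = sM := by
  ext i j
  rw [Matrix.of_apply]
  fin_cases j
  · exact col0 i
  · exact col1 i
  · exact col2 i
  · exact col3 i
  · exact col4 i
  · exact col5 i
  · exact col6 i
  · exact col7 i

set_option maxHeartbeats 1000000 in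
lemma sM_factor : sM = sA * sB := by
  rw [← Matrix.ext_iff]
  intro i j
  fin_cases i <;> fin_cases j <;> simp [sA, sB, sM, Matrix.mul_apply, Fin.sum_univ_succ] <;> norm_num

set_option maxHeartbeats 1000000 in
lemma sCM : sC * sM = sE := by
  rw [← Matrix.ext_iff]
  intro i j
  fin_cases i <;> fin_cases j <;> simp [sC, sE, sM, Matrix.mul_apply, Fin.sum_univ_succ] <;> norm_num

set_option maxHeartbeats 1000000 in
lemma sED : sE * sD = (1 : Matrix (Fin 6) (Fin 6) ℝ) := by
  rw [← Matrix.ext_iff]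
  intro i j
  fin_cases i <;> fin_cases j <;> simp [sE, sD, Matrix.mul_apply, Fin.sum_univ_succ, Matrix.one_apply] <;> norm_num

lemma sCMD : sC * sM * sD = (1 : Matrix (Fin 6) (Fin 6) ℝ) := by
  rw [sCM, sED]

lemma sM_rank : sM.rank = 6 := by
  refine le_antisymm ?_ ?_
  · calc sM.rank = (sA * sB).rank := by rw [sM_factor]
      _ ≤ sB.rank := Matrix.rank_mul_le_right _ _
      _ ≤ Fintype.card (Fin 6) := sB.rank_le_card_height
      _ = 6 := Fintype.card_fin 6
  · calc (6 : ℕ) = Fintype.card (Fin 6) := (Fintype.card_fin 6).symm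
      _ = (1 : Matrix (Fin 6) (Fin 6) ℝ).rank := Matrix.rank_one.symm
      _ = (sC * sM * sD).rank := by rw [sCMD]
      _ ≤ (sC * sM).rank := Matrix.rank_mul_le_left _ _
      _ ≤ sM.rank := Matrix.rank_mul_le_right _ _

/-- All eight constraints of Stachel's extended double-Watt framework vanish at
the configuration `X = (-1, 0, -2, -1, 2, 0, 1, -1)`, and the `8 × 8` Jacobian
matrix (whose `(i,j)` entry is the partial derivative of the `j`-th constraint
with respect to the `i`-th variable) has rank `6` there; in particular `X` is
a singular point of the shakiness variety. -/
theorem stachel_doubleWatt_singular_point :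
    (∀ j : Fin 8, stachelConstraints j stachelConfig = 0) ∧
      Matrix.rank (Matrix.of fun i j : Fin 8 =>
        fderiv ℝ (stachelConstraints j) stachelConfig (Pi.single i 1)) = 6 := by
  constructor
  · intro j
    fin_cases j <;> norm_num [stachelConstraints, stachelConfig, cv8_5, cv8_6, cv8_7, cv7_5, cv7_6, cv6_5, Matrix.vecHead, Matrix.vecTail] <;>
      simp only [Matrix.cons_val] <;> norm_num
  · rw [jac_eq]
    exact sM_rank
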